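/- (Block-Interval Construction.) Let N ≥ 1, let p be a probability vector on N states, let q be a real number with 0 < q < 1, and let k be an index with ∑_{i<k} p i ≤ q and q ≤ ∑_{i≤k} p i. Define probability vectors on N states: c with c 0 = q, c (N−1) = 1−q, and 0 elsewhere; L with L i = p i / q for i < k, L k = (q − ∑_{i<k} p i)/q, and L i = 0 for i > k; and R with R i = 0 for i < k, R k = (∑_{i≤k} p i − q)/(1−q), and R i = p i/(1−q) for i > k. Then p = L ⊕ (c ∗ R) and p = (L ⊕ c) ∗ R. -/

import Mathlib

noncomputable section

/-- Series composition: distribution of `min` of two independent states. -/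
def smin {N : ℕ} (p q : Fin N → ℝ) : Fin N → ℝ :=
  fun k => ∑ i, ∑ j, if min i j = k then p i * q j else 0

/-- Parallel composition: distribution of `max` of two independent states. -/
def smax {N : ℕ} (p q : Fin N → ℝ) : Fin N → ℝ :=
  fun k => ∑ i, ∑ j, if max i j = k then p i * q j else 0

/-- A probability vector on `N` states. -/
def IsProbVec {N : ℕ} (p : Fin N → ℝ) : Prop :=
  (∀ i, 0 ≤ p i) ∧ ∑ i, p i = 1

open Finset

lemma max_split {N : ℕ} (i j m : Fin N) (x : ℝ) :
    (if max i j = m then x else 0)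
      = (if i = m then (if j ≤ m then x else 0) else 0)
        + (if i < m then (if j = m then x else 0) else 0) := by
  rcases lt_trichotomy i m with h | h | h
  · have h1 : max i j = m ↔ j = m := by
      constructor
      · intro hm
        rcases max_eq_iff.mp hm with ⟨h2, _⟩ | ⟨h2, _⟩
        · exact absurd h2 h.ne
        · exact h2
      · intro hj; subst hj; exact max_eq_right h.le
    simp [h1, h, h.ne]
  · subst h
    simp [max_eq_left_iff, lt_irrefl]
  · have h1 : max i j ≠ m := fun hm => absurd ((le_max_left i j).trans hm.le) h.not_ge
    simp [h1, h.ne', not_lt.mpr h.le]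

lemma min_split {N : ℕ} (i j m : Fin N) (x : ℝ) :
    (if min i j = m then x else 0)
      = (if i = m then (if m ≤ j then x else 0) else 0)
        + (if m < i then (if j = m then x else 0) else 0) := by
  rcases lt_trichotomy m i with h | h | h
  · have h1 : min i j = m ↔ j = m := by
      constructor
      · intro hm
        rcases min_eq_iff.mp hm with ⟨h2, _⟩ | ⟨h2, _⟩
        · exact absurd h2 h.ne'
        · exact h2
      · intro hj; subst hj; exact min_eq_right h.le
    simp [h1, h, h.ne']
  · subst h
    simp [min_eq_left_iff, lt_irrefl]
  · have h1 : min i j ≠ m := fun hm => absurd (hm.ge.trans (min_le_left i j)) h.not_ge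
    simp [h1, h.ne, not_lt.mpr h.le]

lemma smax_eq {N : ℕ} (f g : Fin N → ℝ) (m : Fin N) :
    smax f g m = f m * ∑ j ∈ Iic m, g j + (∑ i ∈ Iio m, f i) * g m := by
  unfold smax
  simp_rw [max_split, Finset.sum_add_distrib]
  congr 1
  · rw [Finset.sum_eq_single m ?_ (by simp)]
    · simp only [if_pos, Finset.mul_sum]
      simp_rw [← Finset.mem_Iic]
      rw [Finset.sum_ite_mem, Finset.univ_inter]
    · intro b _ hb; simp [hb]
  · rw [Finset.sum_comm]
    rw [Finset.sum_eq_single m ?_ (by simp)]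
    · simp only [if_pos, Finset.sum_mul]
      simp_rw [← Finset.mem_Iio]
      rw [Finset.sum_ite_mem, Finset.univ_inter]
    · intro b _ hb
      exact Finset.sum_eq_zero fun i _ => by simp [hb]

lemma smin_eq {N : ℕ} (f g : Fin N → ℝ) (m : Fin N) :
    smin f g m = f m * ∑ j ∈ Ici m, g j + (∑ i ∈ Ioi m, f i) * g m := by
  unfold smin
  simp_rw [min_split, Finset.sum_add_distrib]
  congr 1
  · rw [Finset.sum_eq_single m ?_ (by simp)]
    · simp only [if_pos, Finset.mul_sum]
      simp_rw [← Finset.mem_Ici]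
      rw [Finset.sum_ite_mem, Finset.univ_inter]
    · intro b _ hb; simp [hb]
  · rw [Finset.sum_comm]
    rw [Finset.sum_eq_single m ?_ (by simp)]
    · simp only [if_pos, Finset.sum_mul]
      simp_rw [← Finset.mem_Ioi]
      rw [Finset.sum_ite_mem, Finset.univ_inter]
    · intro b _ hb
      exact Finset.sum_eq_zero fun i _ => by simp [hb]

lemma splitIic {n : ℕ} (f : Fin (n+1) → ℝ) (m : Fin (n+1)) :
    ∑ i, f i = ∑ i ∈ Iic m, f i + ∑ i ∈ Ioi m, f i := by
  rw [← Finset.sum_union (by simp [Finset.disjoint_left])]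
  congr 1
  ext x; simp; exact le_or_gt x m

lemma splitIio {n : ℕ} (f : Fin (n+1) → ℝ) (m : Fin (n+1)) :
    ∑ i, f i = ∑ i ∈ Iio m, f i + ∑ i ∈ Ici m, f i := by
  rw [← Finset.sum_union (by simp [Finset.disjoint_left])]
  congr 1
  ext x; simp; exact lt_or_ge x m

lemma IicIio {n : ℕ} (f : Fin (n+1) → ℝ) (m : Fin (n+1)) :
    ∑ i ∈ Iic m, f i = ∑ i ∈ Iio m, f i + f m := by
  rw [← Finset.Iio_insert, Finset.sum_insert (by simp)]
  ring

lemma IciIoi {n : ℕ} (f : Fin (n+1) → ℝ) (m : Fin (n+1)) :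
    ∑ i ∈ Ici m, f i = f m + ∑ i ∈ Ioi m, f i := by
  rw [← Finset.Ioi_insert, Finset.sum_insert (by simp)]

lemma sumIio0 {n : ℕ} (f : Fin (n+1) → ℝ) : ∑ i ∈ Iio (0 : Fin (n+1)), f i = 0 := by
  rw [show Iio (0:Fin (n+1)) = ∅ from by ext x; simp]
  simp

lemma sumIoiLast {n : ℕ} (f : Fin (n+1) → ℝ) : ∑ i ∈ Ioi (Fin.last n), f i = 0 := by
  rw [show Ioi (Fin.last n) = ∅ from by ext x; simp [Fin.lt_def, Fin.le_def]; omega]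
  simp

/-- Block-Interval Construction: cutting a distribution `p` at `q` (within
block `k`) yields `p = L ⊕ (c ∗ R)` and `p = (L ⊕ c) ∗ R`, where `c` is the
cut pswitch and `L`, `R` are the left and right block-interval distributions. -/
theorem block_interval (N : ℕ) (hN : 1 ≤ N) (p : Fin N → ℝ) (hp : IsProbVec p)
    (q : ℝ) (hq0 : 0 < q) (hq1 : q < 1) (k : Fin N)
    (hkl : ∑ i ∈ Finset.Iio k, p i ≤ q) (hkr : q ≤ ∑ i ∈ Finset.Iic k, p i)
    (c L R : Fin N → ℝ)
    (hc : c = fun i : Fin N =>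
      (if (i : ℕ) = 0 then q else 0) + (if (i : ℕ) = N - 1 then 1 - q else 0))
    (hL : L = fun i =>
      if i < k then p i / q
      else if i = k then (q - ∑ j ∈ Finset.Iio k, p j) / q
      else 0)
    (hR : R = fun i =>
      if i < k then 0
      else if i = k then ((∑ j ∈ Finset.Iic k, p j) - q) / (1 - q)
      else p i / (1 - q)) :
    p = smax L (smin c R) ∧ p = smin (smax L c) R := by
  obtain ⟨n, rfl⟩ : ∃ n, N = n + 1 := ⟨N - 1, by omega⟩
  obtain ⟨hp0, hp1⟩ := hp
  have hq0' : q ≠ 0 := ne_of_gt hq0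
  have hq1' : (1:ℝ) - q ≠ 0 := by intro h; linarith
  -- pointwise descriptions
  have hc' : ∀ i : Fin (n+1), c i
      = (if i = 0 then q else 0) + (if i = Fin.last n then 1 - q else 0) := by
    intro i
    rw [hc]
    have h0 : ((i:ℕ) = 0) ↔ (i = 0) := ⟨fun h => Fin.ext (by simpa using h), fun h => by simp [h]⟩
    have h1 : ((i:ℕ) = n + 1 - 1) ↔ (i = Fin.last n) :=
      ⟨fun h => Fin.ext (by simpa using h), fun h => by simp [h, Fin.last]⟩
    simp only [h0, h1]
  have hLlt : ∀ i, i < k → L i = p i / q := fun i h => by rw [hL]; simp [h]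
  have hLk : L k = (q - ∑ j ∈ Finset.Iio k, p j) / q := by rw [hL]; simp
  have hLgt : ∀ i, k < i → L i = 0 := fun i h => by
    rw [hL]; simp [not_lt.mpr h.le, h.ne']
  have hRlt : ∀ i, i < k → R i = 0 := fun i h => by rw [hR]; simp [h]
  have hRk : R k = ((∑ j ∈ Finset.Iic k, p j) - q) / (1 - q) := by rw [hR]; simp
  have hRgt : ∀ i, k < i → R i = p i / (1 - q) := fun i h => by
    rw [hR]; simp [not_lt.mpr h.le, h.ne']
  -- partial sums of L
  have hLIio_le : ∀ m, m ≤ k → ∑ i ∈ Iio m, L i = (∑ i ∈ Iio m, p i) / q := by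
    intro m hm
    rw [Finset.sum_div]
    exact Finset.sum_congr rfl fun i hi => hLlt i (lt_of_lt_of_le (Finset.mem_Iio.mp hi) hm)
  have hLIoi : ∀ m, k ≤ m → ∑ i ∈ Ioi m, L i = 0 := by
    intro m hm
    exact Finset.sum_eq_zero fun i hi => hLgt i (lt_of_le_of_lt hm (Finset.mem_Ioi.mp hi))
  have hLIic_k : ∑ i ∈ Iic k, L i = 1 := by
    rw [IicIio, hLIio_le k le_rfl, hLk, ← add_div]
    field_simp
    ring
  have hLsum : ∑ i, L i = 1 := by
    rw [splitIic L k, hLIic_k, hLIoi k le_rfl]; ring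
  have hLIio_gt : ∀ m, k < m → ∑ i ∈ Iio m, L i = 1 := by
    intro m hm
    have h1 := splitIio L m
    rw [hLsum, IciIoi, hLgt m hm, hLIoi m hm.le] at h1
    linarith
  -- partial sums of R
  have hRIio : ∀ m, m ≤ k → ∑ i ∈ Iio m, R i = 0 := by
    intro m hm
    exact Finset.sum_eq_zero fun i hi => hRlt i (lt_of_lt_of_le (Finset.mem_Iio.mp hi) hm)
  have hRIic_lt : ∀ m, m < k → ∑ i ∈ Iic m, R i = 0 := by
    intro m hm
    exact Finset.sum_eq_zero fun i hi => hRlt i (lt_of_le_of_lt (Finset.mem_Iic.mp hi) hm)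
  have hpIoi : ∑ i ∈ Ioi k, p i = 1 - ∑ i ∈ Finset.Iic k, p i := by
    have := splitIic p k; linarith
  have hRsum : ∑ i, R i = 1 := by
    rw [splitIic R k, IicIio, hRIio k le_rfl, hRk,
      show ∑ i ∈ Ioi k, R i = (∑ i ∈ Ioi k, p i) / (1-q) from by
        rw [Finset.sum_div]
        exact Finset.sum_congr rfl fun i hi => hRgt i (Finset.mem_Ioi.mp hi),
      hpIoi]
    field_simp
    ring
  have hRIci_le : ∀ m, m ≤ k → ∑ i ∈ Ici m, R i = 1 := by
    intro m hm
    have h1 := splitIio R m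
    rw [hRsum, hRIio m hm] at h1
    linarith
  have hRIci_gt : ∀ m, k < m → ∑ i ∈ Ici m, R i = (∑ i ∈ Ici m, p i) / (1 - q) := by
    intro m hm
    rw [Finset.sum_div]
    exact Finset.sum_congr rfl fun i hi => hRgt i (lt_of_lt_of_le hm (Finset.mem_Ici.mp hi))
  -- the degenerate one-state case
  rcases Nat.eq_zero_or_pos n with hn | hn
  · subst hn
    have hk0 : k = 0 := Fin.ext (by omega)
    subst hk0
    have hp01 : p 0 = 1 := by
      have h := hp1
      rw [show (Finset.univ : Finset (Fin 1)) = {0} from by ext x; fin_cases x <;> simp] at h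
      simpa using h
    have hIic : ∑ j ∈ Finset.Iic (0 : Fin 1), p j = 1 := by
      rw [IicIio, sumIio0, hp01]; ring
    have hL0 : L 0 = 1 := by rw [hLk, sumIio0]; field_simp; ring
    have hR0 : R 0 = 1 := by rw [hRk, hIic]; field_simp
    have hc0 : c 0 = 1 := by
      rw [hc', if_pos rfl, if_pos (show (0 : Fin 1) = Fin.last 0 from rfl)]
      ring
    have huniv : (Finset.univ : Finset (Fin 1)) = {0} := by ext x; fin_cases x <;> simp
    constructor <;>
    · funext m
      fin_cases m
      simp only [smax, smin, huniv, Finset.sum_singleton]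
      norm_num [hL0, hR0, hc0, hp01]
  -- now at least two states
  have hlast0 : (0 : Fin (n+1)) ≠ Fin.last n := by
    intro h
    have h2 := congrArg Fin.val h
    simp [Fin.last] at h2
    omega
  have hklast : k ≤ Fin.last n := Fin.le_last k
  have hS' : ∑ j ∈ Finset.Iic k, p j = (∑ j ∈ Finset.Iio k, p j) + p k := IicIio p k
  -- pointwise formula for M = smin c R
  have hM : ∀ j, smin c R j = (if j = 0 then q else 0) + (1 - q) * R j := by
    intro j
    rw [smin_eq]
    have hIoic : ∑ i ∈ Ioi j, c i = if j < Fin.last n then 1 - q else 0 := by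
      rw [Finset.sum_congr rfl fun i _ => hc' i, Finset.sum_add_distrib,
        Finset.sum_ite_eq' (Ioi j) 0 (fun _ => q),
        Finset.sum_ite_eq' (Ioi j) (Fin.last n) (fun _ => 1 - q)]
      have e0 : ((0:Fin (n+1)) ∈ Ioi j) = False := by
        simp [Finset.mem_Ioi, Fin.lt_def]
      have e1 : ((Fin.last n ∈ Ioi j)) = (j < Fin.last n) := by
        simp [Finset.mem_Ioi]
      simp only [e0, e1, if_false]
      ring
    rcases eq_or_lt_of_le (Fin.le_last j) with hj | hj
    · subst hj
      rw [hIoic, hc', IciIoi, sumIoiLast]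
      simp only [if_neg (Ne.symm hlast0), if_pos rfl, lt_self_iff_false, if_false, ite_true, if_true]
      ring
    · rw [hIoic, hc' j, if_pos hj, if_neg (ne_of_lt hj)]
      rcases eq_or_ne j 0 with hj0 | hj0
      · subst hj0
        have hIci : ∑ i ∈ Ici (0:Fin (n+1)), R i = 1 := by
          have h1 := splitIio R 0
          rw [hRsum, sumIio0] at h1
          linarith
        rw [hIci, if_pos rfl]
        ring
      · rw [if_neg hj0]
        ring
  -- pointwise formula for T = smax L c
  have hT : ∀ m, smax L c m = q * L m + (if m = Fin.last n then 1 - q else 0) := by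
    intro m
    rw [smax_eq]
    have hIicc : ∑ i ∈ Iic m, c i = q + (if m = Fin.last n then 1 - q else 0) := by
      rw [Finset.sum_congr rfl fun i _ => hc' i, Finset.sum_add_distrib,
        Finset.sum_ite_eq' (Iic m) 0 (fun _ => q),
        Finset.sum_ite_eq' (Iic m) (Fin.last n) (fun _ => 1 - q)]
      have e0 : ((0:Fin (n+1)) ∈ Iic m) = True := by
        simp [Finset.mem_Iic, Fin.zero_le]
      have e1 : ((Fin.last n ∈ Iic m)) = (m = Fin.last n) := by
        simp only [Finset.mem_Iic]
        exact propext ⟨fun h => le_antisymm (Fin.le_last m) h, fun h => h.ge⟩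
      simp only [e0, e1, if_true]
    rw [hIicc, hc' m]
    rcases eq_or_lt_of_le (Fin.le_last m) with hm | hm
    · subst hm
      have h1 : ∑ i ∈ Iio (Fin.last n), L i = 1 - L (Fin.last n) := by
        have h2 := splitIio L (Fin.last n)
        rw [hLsum, IciIoi, sumIoiLast] at h2
        linarith
      rw [h1]
      simp only [if_pos rfl, if_neg (Ne.symm hlast0)]
      ring
    · rw [if_neg (ne_of_lt hm)]
      rcases eq_or_ne m 0 with hm0 | hm0
      · subst hm0
        rw [sumIio0]
        ring
      · rw [if_neg hm0]
        ring
  constructor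
  · -- p = smax L (smin c R)
    funext m
    rw [smax_eq, Finset.sum_congr rfl fun j _ => hM j, Finset.sum_add_distrib,
      Finset.sum_ite_eq' (Iic m) 0 (fun _ => q), ← Finset.mul_sum, hM m]
    simp only [show ((0:Fin (n+1)) ∈ Iic m) = True from by simp [Finset.mem_Iic, Fin.zero_le], if_true]
    rcases lt_trichotomy m k with h | h | h
    · rw [hLlt m h, hRlt m h, hRIic_lt m h, hLIio_le m h.le]
      rcases eq_or_ne m 0 with h0 | h0
      · rw [if_pos h0, h0, sumIio0]
        field_simp
        ring
      · rw [if_neg h0]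
        field_simp
        ring
    · subst h
      rw [hLk, IicIio R m, hRIio m le_rfl, hRk, hLIio_le m le_rfl, hS']
      rcases eq_or_ne m 0 with h0 | h0
      · rw [if_pos h0, h0, sumIio0]
        field_simp
        ring
      · rw [if_neg h0]
        field_simp
        ring
    · rw [hLgt m h, hLIio_gt m h, hRgt m h,
        if_neg (show m ≠ 0 from by intro h0; rw [h0] at h; simp [Fin.lt_def] at h)]
      field_simp
      ring
  · -- p = smin (smax L c) R
    funext m
    rw [smin_eq, Finset.sum_congr rfl fun i _ => hT i, Finset.sum_add_distrib,
      Finset.sum_ite_eq' (Ioi m) (Fin.last n) (fun _ => 1 - q), ← Finset.mul_sum, hT m]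
    simp only [show ((Fin.last n ∈ Ioi m)) = (m < Fin.last n) from by simp [Finset.mem_Ioi]]
    rcases lt_trichotomy m k with h | h | h
    · rw [hLlt m h, hRlt m h, hRIci_le m h.le,
        if_neg (ne_of_lt (lt_of_lt_of_le h hklast))]
      field_simp
      ring
    · subst h
      rw [hLk, hRk, hRIci_le m le_rfl, hLIoi m le_rfl]
      rcases eq_or_lt_of_le hklast with hkl2 | hkl2
      · have hone : ∑ j ∈ Finset.Iic m, p j = 1 := by
          rw [hkl2, show Iic (Fin.last n) = univ from by ext x; simp [Fin.le_last]]
          exact hp1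
        rw [hone] at hS'
        rw [hone, if_pos hkl2, if_neg (by rw [hkl2]; exact lt_irrefl _)]
        field_simp
        linarith
      · rw [if_neg (ne_of_lt hkl2), if_pos hkl2, hS']
        field_simp
        ring
    · rw [hLgt m h, hLIoi m h.le, hRgt m h, hRIci_gt m h]
      rcases eq_or_lt_of_le (Fin.le_last m) with hm | hm
      · have hpm : ∑ i ∈ Ici m, p i = p m := by
          rw [IciIoi, hm, sumIoiLast]; ring
        rw [hpm, if_pos hm, if_neg (by rw [hm]; exact lt_irrefl _)]
        field_simp
        ring
      · rw [if_neg (ne_of_lt hm), if_pos hm]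
        field_simp
        ring
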